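/- Let n ≥ 2, k ≥ 2, and fix any orientation section σ. Then every element of the image of p←_k − p→_k : M_k → M_{k−1} has a preimage in M_k all of whose coordinates are nonnegative. -/

import Mathlib

open List

/-- A letter of the free group `F_n`: a generator index together with a sign. -/
abbrev Letter (n : ℕ) := Fin n × Bool

/-- The inverse of a letter. -/
def linv {n : ℕ} (a : Letter n) : Letter n := (a.1, !a.2)

@[simp] lemma linv_linv {n : ℕ} (a : Letter n) : linv (linv a) = a := by
  cases a with
  | mk x b => simp [linv]

/-- The (formal) inverse of a word. -/
def wInv {n : ℕ} (w : List (Letter n)) : List (Letter n) := (w.map linv).reverse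

@[simp] lemma wInv_wInv {n : ℕ} (w : List (Letter n)) : wInv (wInv w) = w := by
  simp [wInv, Function.comp_def]

/-- A word is reduced if no two consecutive letters are mutually inverse. -/
def Reduced {n : ℕ} (w : List (Letter n)) : Prop :=
  List.Chain' (fun a b => b ≠ linv a) w

/-- A word is cyclically reduced if it is reduced and its first and last letters
are not mutually inverse. -/
def CyclicallyReduced {n : ℕ} (w : List (Letter n)) : Prop :=
  Reduced w ∧ ∀ a b, w.head? = some a → w.getLast? = some b → a ≠ linv b

/-- `lpow l m` is the `m`-fold concatenation of the list `l` with itself. -/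
def lpow {α : Type*} (l : List α) : ℕ → List α
  | 0 => []
  | m + 1 => l ++ lpow l m

/-- The number of oriented occurrences of `u` in the cyclic word represented by `w`. -/
def orientedOcc {n : ℕ} (u w : List (Letter n)) : ℕ :=
  ((Finset.range w.length).filter (fun i => u <+: lpow (w.rotate i) (u.length + 1))).card

/-- `occ u w` : occurrences of the unoriented word `{u, u⁻¹}` in the cyclic word
represented by `w`. -/
def occ {n : ℕ} (u w : List (Letter n)) : ℕ :=
  orientedOcc u w + orientedOcc (wInv u) w

lemma occ_wInv {n : ℕ} (u w : List (Letter n)) : occ (wInv u) w = occ u w := by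
  simp [occ, wInv_wInv, Nat.add_comm]

/-- Occurrences of `u` as a contiguous factor of `w`. -/
def factOcc {n : ℕ} (u w : List (Letter n)) : ℕ :=
  ((Finset.range (w.length + 1)).filter (fun i => u <+: w.drop i)).card

/-- `occf u w` : occurrences of `{u, u⁻¹}` as a contiguous factor of `w`. -/
def occf {n : ℕ} (u w : List (Letter n)) : ℕ := factOcc u w + factOcc (wInv u) w

/-- Two cyclically reduced words represent the same cyclic word iff one is a
rotation of the other or of its inverse. -/
def SameCyclicWord {n : ℕ} (v w : List (Letter n)) : Prop :=
  (∃ i, w = v.rotate i) ∨ (∃ i, w = (wInv v).rotate i)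

/-- Cyclic reduction: repeatedly delete the first and last letter while they are
mutually inverse. -/
def cyclicReduce {n : ℕ} : List (Letter n) → List (Letter n)
  | [] => []
  | a :: rest =>
    if rest.getLast? = some (linv a) then cyclicReduce rest.dropLast
    else a :: rest
  termination_by w => w.length
  decreasing_by simp [List.length_dropLast]

/-- Oriented reduced words of length `k`. -/
structure RW (n k : ℕ) where
  val : List (Letter n)
  red : Reduced val
  len : val.length = k

instance (n k : ℕ) : DecidableEq (RW n k) := fun a b =>
  decidable_of_iff (a.val = b.val)
    ⟨fun h => by cases a; cases b; cases h; rfl, fun h => congrArg RW.val h⟩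

/-- Identify a reduced word with its inverse: the quotient is the set `W_k` of
unoriented words of length `k`. -/
instance uwSetoid (n k : ℕ) : Setoid (RW n k) where
  r u v := v.val = u.val ∨ v.val = wInv u.val
  iseqv := by
    refine ⟨fun u => Or.inl rfl, ?_, ?_⟩
    · rintro u v (h | h)
      · exact Or.inl h.symm
      · exact Or.inr (by rw [h, wInv_wInv])
    · rintro u v w (h1 | h1) (h2 | h2)
      · exact Or.inl (h2.trans h1)
      · exact Or.inr (h2.trans (congrArg wInv h1))
      · exact Or.inr (h2.trans h1)
      · exact Or.inl (by rw [h2, h1, wInv_wInv])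

instance (n k : ℕ) : ∀ a b : RW n k, Decidable (a ≈ b) := fun a b =>
  show Decidable (b.val = a.val ∨ b.val = wInv a.val) from inferInstance

/-- `W_k` : unoriented reduced words of length `k`. -/
abbrev UW (n k : ℕ) := Quotient (uwSetoid n k)

def toVec (n k : ℕ) (u : RW n k) : List.Vector (Letter n) k := ⟨u.val, u.len⟩

lemma toVec_inj (n k : ℕ) : Function.Injective (toVec n k) := by
  intro a b h
  have h' : a.val = b.val := congrArg Subtype.val h
  cases a; cases b; cases h'; rfl

noncomputable instance (n k : ℕ) : Fintype (RW n k) :=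
  Fintype.ofInjective _ (toVec_inj n k)

noncomputable example (n k : ℕ) : Fintype (UW n k) := inferInstance
noncomputable example (n k : ℕ) : DecidableEq (UW n k) := inferInstance

/-- `M_k` : the free ℤ-module on `W_k`, realized as functions `W_k → ℤ`. -/
abbrev Mk (n k : ℕ) := UW n k → ℤ

/-- `π_k` of the cyclic word represented by `w` : the vector of occurrence counts
of unoriented words of length `k`. -/
def pik (n k : ℕ) (w : List (Letter n)) : Mk n k :=
  Quotient.lift (fun u : RW n k => (occ u.val w : ℤ)) (by
    intro a b hab
    have h : occ a.val w = occ b.val w := by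
      rcases hab with h | h
      · rw [h]
      · rw [h, occ_wInv]
    show ((occ a.val w : ℕ) : ℤ) = ((occ b.val w : ℕ) : ℤ)
    rw [h])

lemma Reduced.drop' {n : ℕ} {w : List (Letter n)} (h : Reduced w) (m : ℕ) :
    Reduced (w.drop m) :=
  List.IsChain.suffix h (List.drop_suffix m w)

lemma Reduced.dropLast' {n : ℕ} {w : List (Letter n)} (h : Reduced w) :
    Reduced w.dropLast :=
  List.IsChain.prefix h (List.dropLast_prefix w)

/-- The unoriented `(k-1)`-suffix of an oriented word of length `k`. -/
def sufC {n k : ℕ} (w : RW n k) : UW n (k - 1) :=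
  Quotient.mk (uwSetoid n (k - 1)) ⟨w.val.drop 1, w.red.drop' 1, by simp [w.len]⟩

/-- The unoriented `(k-1)`-prefix of an oriented word of length `k`. -/
def preC {n k : ℕ} (w : RW n k) : UW n (k - 1) :=
  Quotient.mk (uwSetoid n (k - 1)) ⟨w.val.dropLast, w.red.dropLast', by simp [w.len]⟩

/-- Matrix of `p←_k` w.r.t. the orientation section `σ`: a basis element `w̄` of `M_k`
is sent to the sum of the unoriented `(k-1)`-words at its outward-pointing ends. -/
noncomputable def AOut (n k : ℕ) (σ : List (Letter n) → List (Letter n)) :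
    Matrix (UW n (k - 1)) (UW n k) ℤ := fun ub wb =>
  ∑ w : RW n k,
    if Quotient.mk (uwSetoid n k) w = wb ∧ σ w.val = w.val then
      ((if sufC w = ub ∧ σ (w.val.drop 1) = w.val.drop 1 then 1 else 0) +
       (if preC w = ub ∧ σ (w.val.dropLast) = wInv (w.val.dropLast) then 1 else 0))
    else 0

/-- Matrix of `p→_k` : inward-pointing ends. -/
noncomputable def AIn (n k : ℕ) (σ : List (Letter n) → List (Letter n)) :
    Matrix (UW n (k - 1)) (UW n k) ℤ := fun ub wb =>
  ∑ w : RW n k,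
    if Quotient.mk (uwSetoid n k) w = wb ∧ σ w.val = w.val then
      ((if sufC w = ub ∧ σ (w.val.drop 1) = wInv (w.val.drop 1) then 1 else 0) +
       (if preC w = ub ∧ σ (w.val.dropLast) = w.val.dropLast then 1 else 0))
    else 0

/-- `p←_k : M_k → M_{k-1}`. -/
noncomputable def pOut (n k : ℕ) (σ : List (Letter n) → List (Letter n)) :
    Mk n k →ₗ[ℤ] Mk n (k - 1) := (AOut n k σ).mulVecLin

/-- `p→_k : M_k → M_{k-1}`. -/
noncomputable def pIn (n k : ℕ) (σ : List (Letter n) → List (Letter n)) :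
    Mk n k →ₗ[ℤ] Mk n (k - 1) := (AIn n k σ).mulVecLin

section Aux
variable {n : ℕ}

lemma linv_ne (a : Letter n) : linv a ≠ a := by
  cases a with | mk x b => simp [linv]

lemma ne_linv_comm {a b : Letter n} : a ≠ linv b ↔ b ≠ linv a := by
  constructor <;> (intro h hc; apply h; rw [hc]; simp)

@[simp] lemma length_wInv (w : List (Letter n)) : (wInv w).length = w.length := by
  simp [wInv]

lemma Reduced.wInv_red {w : List (Letter n)} (h : Reduced w) : Reduced (wInv w) := by
  unfold Reduced at *
  simp only [List.Chain'] at *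
  rw [wInv, List.isChain_reverse, List.isChain_map]
  refine h.imp fun a b hab => ?_
  beta_reduce
  intro hc
  exact hab (by rw [hc, linv_linv])

lemma dropLast_map' {α β : Type*} (f : α → β) : ∀ l : List α,
    (l.map f).dropLast = l.dropLast.map f
  | [] => rfl
  | [a] => rfl
  | a :: b :: t => by
    simp only [List.map_cons, List.dropLast_cons₂, List.map_cons]
    rw [← List.map_cons (f := f) (a := b) (l := t), dropLast_map' f (b :: t)]

lemma drop_one_wInv (w : List (Letter n)) : (wInv w).drop 1 = wInv w.dropLast := by
  rw [wInv, wInv, List.drop_one, List.tail_reverse, dropLast_map']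

lemma dropLast_wInv (w : List (Letter n)) : (wInv w).dropLast = wInv (w.drop 1) := by
  have := drop_one_wInv (wInv w)
  rw [wInv_wInv] at this
  rw [this, wInv_wInv]

lemma reduced_getElem_ne {w : List (Letter n)} (hr : Reduced w) {i j : ℕ}
    (hij : j = i + 1) (hj : j < w.length) :
    w[j]'hj ≠ linv (w[i]'(by omega)) := by
  subst hij
  have := List.isChain_iff_getElem.mp hr i (by omega)
  simpa using this

lemma ne_wInv_self {w : List (Letter n)} (hr : Reduced w) (hw : w ≠ []) : w ≠ wInv w := by
  intro h
  have hl : 0 < w.length := List.length_pos_iff.mpr hw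
  have hget : ∀ i, i < w.length → w[i]? = (w[w.length - 1 - i]?).map linv := by
    intro i hi
    conv_lhs => rw [h]
    rw [wInv, List.getElem?_reverse (by simpa using hi), List.getElem?_map]
    simp
  rcases Nat.even_or_odd w.length with he | ho
  · rcases he with ⟨m, hm⟩
    have h2 : 2 ≤ w.length := by omega
    have h1 := hget (w.length / 2) (by omega)
    rw [show w.length - 1 - w.length / 2 = w.length / 2 - 1 by omega] at h1
    rw [List.getElem?_eq_getElem (by omega : w.length / 2 < w.length),
      List.getElem?_eq_getElem (by omega : w.length / 2 - 1 < w.length)] at h1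
    simp only [Option.map_some, Option.some.injEq] at h1
    exact reduced_getElem_ne (i := w.length / 2 - 1) (j := w.length / 2) hr
      (by omega) (by omega) h1
  · rcases ho with ⟨m, hm⟩
    have h1 := hget m (by omega)
    rw [show w.length - 1 - m = m by omega] at h1
    rw [List.getElem?_eq_getElem (by omega : m < w.length)] at h1
    simp only [Option.map_some, Option.some.injEq] at h1
    exact linv_ne _ h1.symm

end Aux
section Aux2
variable {n k : ℕ}

lemma RW.ext' {a b : RW n k} (h : a.val = b.val) : a = b := by
  cases a; cases b; cases h; rfl

/-- The inversion involution on oriented reduced words. -/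
def iot (w : RW n k) : RW n k := ⟨wInv w.val, w.red.wInv_red, by simp [w.len]⟩

@[simp] lemma iot_val (w : RW n k) : (iot w).val = wInv w.val := rfl

lemma iot_inv : Function.Involutive (iot : RW n k → RW n k) := fun w =>
  RW.ext' (by simp)

lemma RW.ne_nil (w : RW n k) (hk : 0 < k) : w.val ≠ [] := by
  intro h
  have := w.len
  rw [h] at this
  simp at this
  omega

variable (σ : List (Letter n) → List (Letter n))

lemma chosen_iot (hσ2 : ∀ u : List (Letter n), σ (wInv u) = σ u)
    (hσ1 : ∀ u : List (Letter n), σ u = u ∨ σ u = wInv u)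
    (hk : 0 < k) (w : RW n k) :
    (σ (iot w).val = (iot w).val) ↔ ¬ (σ w.val = w.val) := by
  have hne := ne_wInv_self w.red (w.ne_nil hk)
  simp only [iot_val, hσ2]
  constructor
  · intro h1 h2
    exact hne (h2.symm.trans h1)
  · intro h2
    rcases hσ1 w.val with h | h
    · exact absurd h h2
    · exact h

lemma sufC_iot (w : RW n k) : sufC (iot w) = preC w := by
  apply Quotient.sound
  right
  show w.val.dropLast = wInv ((iot w).val.drop 1)
  rw [iot_val, drop_one_wInv, wInv_wInv]

lemma preC_iot (w : RW n k) : preC (iot w) = sufC w := by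
  apply Quotient.sound
  right
  show w.val.drop 1 = wInv ((iot w).val.dropLast)
  rw [iot_val, dropLast_wInv, wInv_wInv]

/-- outward suffix indicator -/
noncomputable def SO (ub : UW n (k - 1)) (w : RW n k) : ℤ :=
  if sufC w = ub ∧ σ (w.val.drop 1) = w.val.drop 1 then 1 else 0

/-- outward prefix indicator -/
noncomputable def PO (ub : UW n (k - 1)) (w : RW n k) : ℤ :=
  if preC w = ub ∧ σ (w.val.dropLast) = wInv (w.val.dropLast) then 1 else 0

/-- inward suffix indicator -/
noncomputable def SI (ub : UW n (k - 1)) (w : RW n k) : ℤ :=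
  if sufC w = ub ∧ σ (w.val.drop 1) = wInv (w.val.drop 1) then 1 else 0

/-- inward prefix indicator -/
noncomputable def PI (ub : UW n (k - 1)) (w : RW n k) : ℤ :=
  if preC w = ub ∧ σ (w.val.dropLast) = w.val.dropLast then 1 else 0

lemma SO_iot (hσ2 : ∀ u : List (Letter n), σ (wInv u) = σ u) (ub : UW n (k-1)) (w : RW n k) : SO σ ub (iot w) = PO σ ub w := by
  unfold SO PO
  rw [sufC_iot, iot_val, drop_one_wInv, hσ2]

lemma PO_iot (hσ2 : ∀ u : List (Letter n), σ (wInv u) = σ u) (ub : UW n (k-1)) (w : RW n k) : PO σ ub (iot w) = SO σ ub w := by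
  unfold SO PO
  rw [preC_iot, iot_val, dropLast_wInv, hσ2, wInv_wInv]

lemma SI_iot (hσ2 : ∀ u : List (Letter n), σ (wInv u) = σ u) (ub : UW n (k-1)) (w : RW n k) : SI σ ub (iot w) = PI σ ub w := by
  unfold SI PI
  rw [sufC_iot, iot_val, drop_one_wInv, hσ2, wInv_wInv]

lemma PI_iot (hσ2 : ∀ u : List (Letter n), σ (wInv u) = σ u) (ub : UW n (k-1)) (w : RW n k) : PI σ ub (iot w) = SI σ ub w := by
  unfold SI PI
  rw [preC_iot, iot_val, dropLast_wInv, hσ2]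

end Aux2
section Aux3
variable {n k : ℕ}

lemma count_drop (hk : 2 ≤ k) (v : List (Letter n)) (hv : Reduced v)
    (hl : v.length = k - 1) :
    (Finset.univ.filter (fun w : RW n k => w.val.drop 1 = v)).card = 2 * n - 1 := by
  have h0 : v ≠ [] := by
    intro h; rw [h] at hl; simp at hl; omega
  have hcard : (Finset.univ.erase (linv (v.head h0))).card = 2 * n - 1 := by
    rw [Finset.card_erase_of_mem (Finset.mem_univ _), Finset.card_univ]
    simp [Fintype.card_prod]
    omega
  rw [← hcard]
  have hlen' : ∀ a : Letter n, (a :: v).length = k := by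
    intro a; simp [hl]; omega
  have hred' : ∀ a : Letter n, a ∈ Finset.univ.erase (linv (v.head h0)) →
      Reduced (a :: v) := by
    intro a ha
    rw [Finset.mem_erase] at ha
    rw [Reduced]
    simp only [List.Chain']
    rw [List.isChain_cons]
    refine ⟨?_, hv⟩
    intro y hy
    rw [List.head?_eq_head h0] at hy
    cases hy
    exact ne_linv_comm.mp ha.1
  apply Finset.card_bij' (fun w _ => w.val.head (w.ne_nil (by omega)))
    (fun a ha => (⟨a :: v, hred' a ha, hlen' a⟩ : RW n k))
  · -- left inverse
    intro w hw
    apply RW.ext'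
    simp only
    rw [Finset.mem_filter] at hw
    conv_rhs => rw [← List.cons_head_tail (l := w.val) (w.ne_nil (by omega))]
    rw [← List.drop_one, hw.2]
  · -- right inverse
    intro a ha
    simp
  · -- i maps into target
    intro w hw
    rw [Finset.mem_filter] at hw
    rw [Finset.mem_erase]
    refine ⟨?_, Finset.mem_univ _⟩
    have hd : w.val = w.val.head (w.ne_nil (by omega)) :: v := by
      conv_lhs => rw [← List.cons_head_tail (l := w.val) (w.ne_nil (by omega))]
      rw [← List.drop_one, hw.2]
    have hred := w.red
    rw [Reduced, hd] at hred
    simp only [List.Chain'] at hred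
    rw [List.isChain_cons] at hred
    have := hred.1 (v.head h0) (List.head?_eq_head h0)
    exact ne_linv_comm.mpr this
  · -- j maps into source
    intro a ha
    rw [Finset.mem_filter]
    exact ⟨Finset.mem_univ _, by simp⟩

variable (σ : List (Letter n) → List (Letter n))

lemma SO_eq (hσ1 : ∀ u : List (Letter n), σ u = u ∨ σ u = wInv u)
    (hσ2 : ∀ u : List (Letter n), σ (wInv u) = σ u) (hk : 2 ≤ k)
    (u : RW n (k - 1)) (hu : σ u.val = u.val) (w : RW n k) :
    SO σ (Quotient.mk (uwSetoid n (k - 1)) u) w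
      = if w.val.drop 1 = u.val then 1 else 0 := by
  have hune := ne_wInv_self u.red (u.ne_nil (by omega))
  unfold SO
  by_cases hd : w.val.drop 1 = u.val
  · rw [if_pos hd, if_pos]
    constructor
    · exact Quotient.sound (Or.inl hd.symm)
    · rw [hd, hu]
  · rw [if_neg hd, if_neg]
    rintro ⟨h1, h2⟩
    rcases Quotient.exact h1 with h | h
    · exact hd h.symm
    · have h' : u.val = wInv (w.val.drop 1) := h
      have hs : w.val.drop 1 = wInv u.val := by rw [h', wInv_wInv]
      rw [hs, hσ2, hu] at h2
      exact hune h2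

lemma SI_eq (hσ1 : ∀ u : List (Letter n), σ u = u ∨ σ u = wInv u)
    (hσ2 : ∀ u : List (Letter n), σ (wInv u) = σ u) (hk : 2 ≤ k)
    (u : RW n (k - 1)) (hu : σ u.val = u.val) (w : RW n k) :
    SI σ (Quotient.mk (uwSetoid n (k - 1)) u) w
      = if w.val.drop 1 = wInv u.val then 1 else 0 := by
  have hune := ne_wInv_self u.red (u.ne_nil (by omega))
  unfold SI
  by_cases hd : w.val.drop 1 = wInv u.val
  · rw [if_pos hd, if_pos]
    constructor
    · refine Quotient.sound (Or.inr ?_)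
      show u.val = wInv (w.val.drop 1)
      rw [hd, wInv_wInv]
    · rw [hd, hσ2, hu, wInv_wInv]
  · rw [if_neg hd, if_neg]
    rintro ⟨h1, h2⟩
    rcases Quotient.exact h1 with h | h
    · have h' : u.val = w.val.drop 1 := h
      rw [← h', hu] at h2
      exact hune h2
    · have h' : u.val = wInv (w.val.drop 1) := h
      exact hd (by rw [h', wInv_wInv])

end Aux3
section Aux4
variable {n k : ℕ} (σ : List (Letter n) → List (Letter n))

lemma col_out (ub : UW n (k - 1)) :
    ∑ wb : UW n k, AOut n k σ ub wb
      = ∑ w : RW n k, (if σ w.val = w.val then SO σ ub w + PO σ ub w else 0) := by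
  unfold AOut
  rw [Finset.sum_comm]
  refine Finset.sum_congr rfl fun w _ => ?_
  by_cases hc : σ w.val = w.val
  · simp only [hc, and_true, if_pos hc]
    rw [Finset.sum_ite_eq]
    simp [SO, PO]
  · simp [hc]

lemma col_in (ub : UW n (k - 1)) :
    ∑ wb : UW n k, AIn n k σ ub wb
      = ∑ w : RW n k, (if σ w.val = w.val then SI σ ub w + PI σ ub w else 0) := by
  unfold AIn
  rw [Finset.sum_comm]
  refine Finset.sum_congr rfl fun w _ => ?_
  by_cases hc : σ w.val = w.val
  · simp only [hc, and_true, if_pos hc]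
    rw [Finset.sum_ite_eq]
    simp [SI, PI]
  · simp [hc]

lemma sum_out_eq_sum_in (hn : 2 ≤ n) (hk : 2 ≤ k)
    (hσ1 : ∀ u : List (Letter n), σ u = u ∨ σ u = wInv u)
    (hσ2 : ∀ u : List (Letter n), σ (wInv u) = σ u) (ub : UW n (k - 1)) :
    ∑ wb : UW n k, AOut n k σ ub wb = ∑ wb : UW n k, AIn n k σ ub wb := by
  have hsum_comp : ∀ F : RW n k → ℤ, ∑ w : RW n k, F (iot w) = ∑ w : RW n k, F w :=
    fun F => Equiv.sum_comp (Function.Involutive.toPerm iot iot_inv) F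
  have hhalf : ∀ (Sf Pf : RW n k → ℤ),
      (∀ w, Sf (iot w) = Pf w) → (∀ w, Pf (iot w) = Sf w) →
      (∑ w : RW n k, if σ w.val = w.val then Sf w + Pf w else 0)
        = ∑ w : RW n k, Sf w := by
    intro Sf Pf h1 h2
    apply mul_left_cancel₀ (two_ne_zero (α := ℤ))
    have hflip : (∑ w : RW n k, if σ w.val = w.val then Sf w + Pf w else 0)
        = ∑ w : RW n k, if ¬ σ w.val = w.val then Sf w + Pf w else 0 := by
      conv_lhs => rw [← hsum_comp (fun w => if σ w.val = w.val then Sf w + Pf w else 0)]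
      refine Finset.sum_congr rfl fun w _ => ?_
      simp only [h1, h2]
      exact if_congr (chosen_iot σ hσ2 hσ1 (by omega) w) (add_comm _ _) rfl
    have hP : ∑ w : RW n k, Pf w = ∑ w : RW n k, Sf w := by
      rw [← hsum_comp Pf]
      exact Finset.sum_congr rfl fun w _ => h2 w
    calc 2 * (∑ w : RW n k, if σ w.val = w.val then Sf w + Pf w else 0)
        = (∑ w : RW n k, if σ w.val = w.val then Sf w + Pf w else 0)
          + (∑ w : RW n k, if ¬ σ w.val = w.val then Sf w + Pf w else 0) := by
          rw [← hflip, two_mul]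
      _ = ∑ w : RW n k, ((if σ w.val = w.val then Sf w + Pf w else 0)
          + (if ¬ σ w.val = w.val then Sf w + Pf w else 0)) := by
          rw [Finset.sum_add_distrib]
      _ = ∑ w : RW n k, (Sf w + Pf w) := by
          refine Finset.sum_congr rfl fun w _ => ?_
          by_cases hc : σ w.val = w.val <;> simp [hc]
      _ = (∑ w : RW n k, Sf w) + ∑ w : RW n k, Pf w := Finset.sum_add_distrib
      _ = 2 * ∑ w : RW n k, Sf w := by rw [hP, two_mul]
  rw [col_out, col_in, hhalf (SO σ ub) (PO σ ub) (SO_iot σ hσ2 ub) (PO_iot σ hσ2 ub),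
    hhalf (SI σ ub) (PI σ ub) (SI_iot σ hσ2 ub) (PI_iot σ hσ2 ub)]
  -- choose a σ-chosen representative of ub
  obtain ⟨u0, hu0⟩ := Quotient.exists_rep ub
  obtain ⟨u, hu, hus⟩ : ∃ u : RW n (k - 1),
      Quotient.mk (uwSetoid n (k - 1)) u = ub ∧ σ u.val = u.val := by
    rcases hσ1 u0.val with h | h
    · exact ⟨u0, hu0, h⟩
    · refine ⟨⟨wInv u0.val, u0.red.wInv_red, by simp [u0.len]⟩, ?_, ?_⟩
      · rw [← hu0]
        exact Quotient.sound (Or.inr (wInv_wInv u0.val).symm)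
      · show σ (wInv u0.val) = wInv u0.val
        rw [hσ2, h]
  subst hu
  rw [Finset.sum_congr rfl fun w _ => SO_eq σ hσ1 hσ2 hk u hus w,
    Finset.sum_congr rfl fun w _ => SI_eq σ hσ1 hσ2 hk u hus w]
  rw [Finset.sum_boole, Finset.sum_boole]
  rw [count_drop hk u.val u.red u.len,
    count_drop hk (wInv u.val) u.red.wInv_red (by simp [u.len])]

lemma DOne (hn : 2 ≤ n) (hk : 2 ≤ k)
    (hσ1 : ∀ u : List (Letter n), σ u = u ∨ σ u = wInv u)
    (hσ2 : ∀ u : List (Letter n), σ (wInv u) = σ u) :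
    (pOut n k σ - pIn n k σ) (fun _ => (1 : ℤ)) = 0 := by
  funext ub
  show (pOut n k σ - pIn n k σ) (fun _ => (1 : ℤ)) ub = 0
  rw [LinearMap.sub_apply]
  show (pOut n k σ) (fun _ => (1 : ℤ)) ub - (pIn n k σ) (fun _ => (1 : ℤ)) ub = 0
  rw [sub_eq_zero]
  show ((AOut n k σ).mulVec fun _ => 1) ub = ((AIn n k σ).mulVec fun _ => 1) ub
  simp only [Matrix.mulVec, dotProduct, mul_one]
  exact sum_out_eq_sum_in σ hn hk hσ1 hσ2 ub

end Aux4
/-- Every element of the image of `p←_k - p→_k` has a nonnegative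
preimage. -/
theorem nonneg_preimage (n k : ℕ) (hn : 2 ≤ n) (hk : 2 ≤ k)
    (σ : List (Letter n) → List (Letter n))
    (hσ1 : ∀ u : List (Letter n), σ u = u ∨ σ u = wInv u)
    (hσ2 : ∀ u : List (Letter n), σ (wInv u) = σ u) :
    ∀ v : Mk n (k - 1), v ∈ LinearMap.range (pOut n k σ - pIn n k σ) →
      ∃ f : Mk n k, (∀ ub : UW n k, 0 ≤ f ub) ∧ (pOut n k σ - pIn n k σ) f = v := by
  intro v hv
  obtain ⟨f, hf⟩ := hv
  set c : ℤ := ∑ ub : UW n k, |f ub| with hc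
  refine ⟨fun ub => f ub + c, ?_, ?_⟩
  · intro ub
    have h1 : |f ub| ≤ c :=
      Finset.single_le_sum (fun i _ => abs_nonneg (f i)) (Finset.mem_univ ub)
    have h2 := neg_abs_le (f ub)
    show 0 ≤ f ub + c
    linarith
  · have key : (fun ub => f ub + c) = f + c • (fun _ => (1 : ℤ)) := by
      funext ub
      simp [Pi.add_apply, mul_comm]
    rw [key, map_add, map_smul, DOne σ hn hk hσ1 hσ2, smul_zero, add_zero, hf]
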